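/- Let f : ℂ → ℂ be square integrable with respect to the Gaussian measure dμ(w) = (1/π) exp(−|w|²) dA(w) and let n ≥ 0 be an integer. Then the Berezin transform B(f) is smooth, and the n-th iterated Wirtinger derivative (∂/∂z)^n B(f) satisfies, for every z ∈ ℂ: (∂/∂z)^n B(f)(z) = Σ_{k=0}^{n} (−1)^k · (n choose k) · conj(z)^k · B(conj(w)^{n−k}·f)(z) = (1/π) ∫_ℂ exp(−|z−w|²) · (conj(w) − conj(z))^n · f(w) dA(w). -/

import Mathlib

open Complex ComplexConjugate MeasureTheory

/-- The Gaussian measure `dμ(w) = (1/π)·exp(−|w|²) dA(w)` on `ℂ`. -/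
noncomputable def gaussianMeasure : Measure ℂ :=
  volume.withDensity fun w => ENNReal.ofReal (Real.exp (-‖w‖ ^ 2) / Real.pi)

/-- The Berezin transform `B(f)(z) = (1/π)∫_ℂ exp(−|z−w|²) f(w) dA(w)`. -/
noncomputable def berezin (f : ℂ → ℂ) (z : ℂ) : ℂ :=
  (1 / (Real.pi : ℂ)) * ∫ w : ℂ, Complex.exp (-((‖z - w‖ : ℂ) ^ 2)) * f w

/-- The Wirtinger derivative `∂f/∂z = (1/2)(∂f/∂x − i·∂f/∂y)`, as an operator on
functions `ℂ → ℂ`. -/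
noncomputable def wirtingerDerivOp (f : ℂ → ℂ) : ℂ → ℂ :=
  fun z => (fderiv ℝ f z 1 - Complex.I * fderiv ℝ f z Complex.I) / 2

lemma gauss_int : Integrable (fun w : ℂ => Real.exp (-(4⁻¹ : ℝ) * ‖w‖ ^ 2)) volume := by
  have h := GaussianFourier.integrable_cexp_neg_mul_sq_norm_add (V := ℂ)
    (b := (4⁻¹ : ℂ)) (by norm_num) 0 0
  refine h.norm.congr ?_
  filter_upwards with w
  rw [Complex.norm_exp]
  congr 1
  rw [← Complex.ofReal_pow]
  simp [Complex.add_re, Complex.mul_re, ← Complex.ofReal_pow]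

lemma gint (f : ℂ → ℂ) (hm : AEStronglyMeasurable f volume)
    (hint : Integrable (fun w => ‖f w‖ ^ 2 * Real.exp (-‖w‖ ^ 2)) volume) (m : ℕ) (z : ℂ) :
    Integrable (fun w => (1 + ‖w‖) ^ m * (Real.exp (-(3/4 : ℝ) * ‖w - z‖ ^ 2) * ‖f w‖))
      volume := by
  set c : ℝ := (m : ℝ) + (3/2) * ‖z‖ with hc
  have hcn : 0 ≤ c := by positivity
  refine ((gauss_int.const_mul (Real.exp (4 * c ^ 2))).add hint).mono' ?_ ?_
  · exact ((by fun_prop : Continuous fun w : ℂ => (1 + ‖w‖) ^ m).aestronglyMeasurable).mul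
      (((by fun_prop : Continuous fun w : ℂ =>
        Real.exp (-(3/4 : ℝ) * ‖w - z‖ ^ 2)).aestronglyMeasurable).mul hm.norm)
  · filter_upwards with w
    rw [Real.norm_of_nonneg (by positivity)]
    simp only [Pi.add_apply]
    set t := ‖w‖ with ht
    set s := ‖w - z‖ with hs
    set F := ‖f w‖ with hF
    have htn : 0 ≤ t := norm_nonneg w
    have hFn : 0 ≤ F := norm_nonneg _
    have hts : (t - ‖z‖) ^ 2 ≤ s ^ 2 := by
      have h1 := abs_norm_sub_norm_le w z
      calc (t - ‖z‖) ^ 2 = |t - ‖z‖| ^ 2 := (_root_.sq_abs _).symm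
        _ ≤ s ^ 2 := pow_le_pow_left₀ (abs_nonneg _) h1 2
    clear_value c t s F
    set X : ℝ := (1 + t) ^ m * Real.exp (-(3/4 : ℝ) * s ^ 2 + t ^ 2 / 2) with hX
    set Y : ℝ := F * Real.exp (-(t ^ 2 / 2)) with hY
    have hXn : 0 ≤ X := by
      rw [hX]; exact mul_nonneg (pow_nonneg (by linarith) m) (Real.exp_nonneg _)
    have hYn : 0 ≤ Y := by
      rw [hY]; exact mul_nonneg hFn (Real.exp_nonneg _)
    have hexp2 : Real.exp (-(3/4 : ℝ) * s ^ 2 + t ^ 2 / 2) * Real.exp (-(t ^ 2 / 2))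
        = Real.exp (-(3/4 : ℝ) * s ^ 2) := by rw [← Real.exp_add]; ring_nf
    have hXY : X * Y = (1 + t) ^ m * (Real.exp (-(3/4 : ℝ) * s ^ 2) * F) := by
      calc X * Y = (1 + t) ^ m * F *
            (Real.exp (-(3/4 : ℝ) * s ^ 2 + t ^ 2 / 2) * Real.exp (-(t ^ 2 / 2))) := by
              rw [hX, hY]; ring
        _ = (1 + t) ^ m * (Real.exp (-(3/4 : ℝ) * s ^ 2) * F) := by rw [hexp2]; ring
    have hXle : X ≤ Real.exp (2 * c ^ 2 - t ^ 2 / 8) := by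
      have h1 : (1 + t) ^ m ≤ Real.exp ((m : ℝ) * t) := by
        calc (1 + t) ^ m ≤ (Real.exp t) ^ m :=
              pow_le_pow_left₀ (by linarith) (by linarith [Real.add_one_le_exp t]) m
          _ = Real.exp ((m : ℝ) * t) := by rw [← Real.exp_nat_mul]
      have h2 : Real.exp (-(3/4 : ℝ) * s ^ 2 + t ^ 2 / 2)
          ≤ Real.exp ((3/2) * ‖z‖ * t - t ^ 2 / 4) := by
        apply Real.exp_le_exp.2
        nlinarith [hts, sq_nonneg (‖z‖)]
      calc X ≤ Real.exp ((m : ℝ) * t) * Real.exp ((3/2) * ‖z‖ * t - t ^ 2 / 4) :=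
            mul_le_mul h1 h2 (by positivity) (by positivity)
        _ = Real.exp (c * t - t ^ 2 / 4) := by rw [← Real.exp_add, hc]; ring_nf
        _ ≤ Real.exp (2 * c ^ 2 - t ^ 2 / 8) := by
            apply Real.exp_le_exp.2
            have h8 : 0 ≤ (t - 4 * c) ^ 2 := sq_nonneg _
            nlinarith [h8]
    calc (1 + t) ^ m * (Real.exp (-(3/4 : ℝ) * s ^ 2) * F) = X * Y := hXY.symm
      _ ≤ X * X + Y * Y := by nlinarith [sq_nonneg (X - Y)]
      _ ≤ Real.exp (4 * c ^ 2) * Real.exp (-(4⁻¹ : ℝ) * t ^ 2) + F ^ 2 * Real.exp (-t ^ 2) := by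
          gcongr ?_ + ?_
          · calc X * X ≤ Real.exp (2 * c ^ 2 - t ^ 2 / 8) * Real.exp (2 * c ^ 2 - t ^ 2 / 8) :=
                  mul_le_mul hXle hXle hXn (by positivity)
              _ = Real.exp (4 * c ^ 2) * Real.exp (-(4⁻¹ : ℝ) * t ^ 2) := by
                  rw [← Real.exp_add, ← Real.exp_add]; ring_nf
          · refine le_of_eq ?_
            have hexp3 : Real.exp (-(t ^ 2 / 2)) * Real.exp (-(t ^ 2 / 2))
                = Real.exp (-t ^ 2) := by rw [← Real.exp_add]; ring_nf
            calc Y * Y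
                = F ^ 2 * (Real.exp (-(t ^ 2 / 2)) * Real.exp (-(t ^ 2 / 2))) := by rw [hY]; ring
              _ = F ^ 2 * Real.exp (-t ^ 2) := by rw [hexp3]

noncomputable def cjR : ℂ →L[ℝ] ℂ := Complex.conjCLE.toContinuousLinearMap

noncomputable def idR : ℂ →L[ℝ] ℂ := ContinuousLinearMap.id ℝ ℂ

@[simp] lemma cjR_apply (x : ℂ) : cjR x = conj x := rfl

@[simp] lemma idR_apply (x : ℂ) : idR x = x := rfl

noncomputable def ker (f : ℂ → ℂ) (j k : ℕ) (z w : ℂ) : ℂ :=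
  Complex.exp (-((‖z - w‖ : ℂ) ^ 2)) * ((w - z) ^ j * ((conj w - conj z) ^ k * f w))

lemma exp_norm_sq_eq (z w : ℂ) :
    Complex.exp (-((‖z - w‖ : ℂ) ^ 2))
      = Complex.exp (-((z - w) * (conj z - conj w))) := by
  congr 1
  rw [← map_sub]
  rw [Complex.mul_conj]
  norm_cast
  rw [Complex.normSq_eq_norm_sq]

lemma ker_eq (f : ℂ → ℂ) (j k : ℕ) (z w : ℂ) :
    ker f j k z w = Complex.exp (-((z - w) * (conj z - conj w))) *
      ((w - z) ^ j * ((conj w - conj z) ^ k * f w)) := by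
  rw [ker, exp_norm_sq_eq]

/-- Derivative of `x ↦ (a - g x) ^ j`. -/
lemma hasFDerivAt_sub_pow {g : ℂ → ℂ} {g' : ℂ →L[ℝ] ℂ} {z : ℂ}
    (hg : HasFDerivAt g g' z) (a : ℂ) (j : ℕ) :
    HasFDerivAt (fun x => (a - g x) ^ j)
      (((j : ℂ) * (a - g z) ^ (j - 1)) • (-g')) z := by
  induction j with
  | zero =>
    simp only [pow_zero, Nat.cast_zero, zero_mul, zero_smul]
    convert hasFDerivAt_const (𝕜 := ℝ) (1 : ℂ) z using 1
    simp
  | succ m ih =>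
    have h2 := ih.mul (hg.const_sub a)
    convert h2 using 1
    case e'_4 => rfl
    case e'_8 => rfl
    case e'_11 => funext x; exact pow_succ _ _
    have hsc : (a - g z) * ((m : ℂ) * (a - g z) ^ (m - 1))
        = (m : ℂ) * (a - g z) ^ m := by
      cases m with
      | zero => simp
      | succ p => rw [Nat.succ_sub_one]; ring
    rw [smul_smul, ← add_smul]
    congr 1
    rw [Nat.succ_sub_one, hsc]
    push_cast
    ring

noncomputable def kerD (f : ℂ → ℂ) (j k : ℕ) (z w : ℂ) : ℂ →L[ℝ] ℂ :=
  (ker f j (k + 1) z w - (j : ℂ) * ker f (j - 1) k z w) • idR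
    + (ker f (j + 1) k z w - (k : ℂ) * ker f j (k - 1) z w) • cjR

lemma hasFDerivAt_ker (f : ℂ → ℂ) (j k : ℕ) (w z : ℂ) :
    HasFDerivAt (fun x => ker f j k x w) (kerD f j k z w) z := by
  have hfun : (fun x : ℂ => ker f j k x w)
      = fun x => Complex.exp (-((x - w) * (conj x - conj w))) *
        ((w - x) ^ j * ((conj w - conj x) ^ k * f w)) := funext fun x => ker_eq f j k x w
  rw [hfun]
  have hid : HasFDerivAt (fun x : ℂ => x) idR z := hasFDerivAt_id z
  have hcj : HasFDerivAt (fun x : ℂ => conj x) cjR z := cjR.hasFDerivAt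
  have hu : HasFDerivAt (fun x : ℂ => x - w) idR z := hid.sub_const w
  have hv : HasFDerivAt (fun x : ℂ => conj x - conj w) cjR z := hcj.sub_const (conj w)
  have hE : HasFDerivAt (fun x : ℂ => Complex.exp (-((x - w) * (conj x - conj w))))
      ((Complex.exp (-((z - w) * (conj z - conj w)))) •
        (-((z - w) • cjR + (conj z - conj w) • idR))) z := ((hu.mul hv).neg).cexp
  have hp := hasFDerivAt_sub_pow hid w j
  have hq := hasFDerivAt_sub_pow hcj (conj w) k
  have h1 := hq.mul_const (f w)
  have h2 := hp.mul h1
  have h3 := hE.mul h2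
  convert h3 using 1
  case e'_4 => rfl
  case e'_8 => rfl
  case e'_11 => rfl
  ext h
  simp only [kerD, ker_eq, ContinuousLinearMap.add_apply, ContinuousLinearMap.smul_apply,
    ContinuousLinearMap.neg_apply, idR_apply, cjR_apply, smul_eq_mul, Pi.mul_apply]
  ring

noncomputable def L (f : ℂ → ℂ) (j k : ℕ) (z : ℂ) : ℂ := ∫ w, ker f j k z w

section Main

lemma aesm_ker {f : ℂ → ℂ} (hm : AEStronglyMeasurable f volume) (j k : ℕ) (x : ℂ) : AEStronglyMeasurable (fun w => ker f j k x w) volume := by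
  unfold ker
  exact ((by fun_prop : Continuous fun w : ℂ =>
      Complex.exp (-((‖x - w‖ : ℂ) ^ 2))).aestronglyMeasurable).mul
    (((by fun_prop : Continuous fun w : ℂ => (w - x) ^ j).aestronglyMeasurable).mul
      ((((continuous_conj.sub continuous_const).pow k).aestronglyMeasurable).mul hm))

lemma norm_ker (f : ℂ → ℂ) (j k : ℕ) (z w : ℂ) :
    ‖ker f j k z w‖ = Real.exp (-‖z - w‖ ^ 2) * (‖w - z‖ ^ (j + k) * ‖f w‖) := by
  have h1 : ‖Complex.exp (-((‖z - w‖ : ℂ) ^ 2))‖ = Real.exp (-‖z - w‖ ^ 2) := by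
    rw [Complex.norm_exp]
    congr 1
    rw [← Complex.ofReal_pow]
    simp [← Complex.ofReal_pow]
  have h2 : ‖conj w - conj z‖ = ‖w - z‖ := by
    rw [← map_sub]
    exact RCLike.norm_conj _
  rw [ker, norm_mul, norm_mul, norm_mul, norm_pow, norm_pow, h1, h2, pow_add]
  ring

lemma ker_bound (f : ℂ → ℂ) (j k : ℕ) (z₀ : ℂ) {x : ℂ} (hx : x ∈ Metric.ball z₀ 1)
    (p : ℕ) (hp : j + k ≤ p) (w : ℂ) :
    ‖ker f j k x w‖ ≤ (Real.exp 3 * (1 + ‖z₀‖) ^ p) *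
      ((1 + ‖w‖) ^ p * (Real.exp (-(3/4 : ℝ) * ‖w - z₀‖ ^ 2) * ‖f w‖)) := by
  rw [norm_ker]
  have hxz : ‖x - z₀‖ ≤ 1 := le_of_lt (by simpa [Metric.mem_ball, dist_eq_norm] using hx)
  have hWn : (0:ℝ) ≤ ‖w‖ := norm_nonneg _
  have hZn : (0:ℝ) ≤ ‖z₀‖ := norm_nonneg _
  have hxn : ‖x‖ ≤ ‖z₀‖ + 1 := by
    calc ‖x‖ = ‖z₀ + (x - z₀)‖ := by ring_nf
      _ ≤ ‖z₀‖ + ‖x - z₀‖ := norm_add_le _ _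
      _ ≤ ‖z₀‖ + 1 := by linarith
  have h1 : ‖w - x‖ ≤ (1 + ‖z₀‖) * (1 + ‖w‖) := by
    calc ‖w - x‖ ≤ ‖w‖ + ‖x‖ := norm_sub_le _ _
      _ ≤ (1 + ‖z₀‖) * (1 + ‖w‖) := by nlinarith
  have h2 : ‖w - x‖ ^ (j + k) ≤ ((1 + ‖z₀‖) * (1 + ‖w‖)) ^ p := by
    calc ‖w - x‖ ^ (j + k) ≤ ((1 + ‖z₀‖) * (1 + ‖w‖)) ^ (j + k) :=
          pow_le_pow_left₀ (norm_nonneg _) h1 _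
      _ ≤ ((1 + ‖z₀‖) * (1 + ‖w‖)) ^ p :=
          pow_le_pow_right₀ (by nlinarith) hp
  have h3 : Real.exp (-‖x - w‖ ^ 2) ≤ Real.exp 3 * Real.exp (-(3/4 : ℝ) * ‖w - z₀‖ ^ 2) := by
    rw [← Real.exp_add]
    apply Real.exp_le_exp.2
    set s := ‖x - w‖ with hs
    set t := ‖w - z₀‖ with htd
    have hsn : (0:ℝ) ≤ s := norm_nonneg _
    have htn : (0:ℝ) ≤ t := norm_nonneg _
    have hst : t ≤ s + 1 := by
      calc t = ‖(w - x) + (x - z₀)‖ := by rw [htd]; ring_nf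
        _ ≤ ‖w - x‖ + ‖x - z₀‖ := norm_add_le _ _
        _ ≤ s + 1 := by rw [hs, norm_sub_rev]; linarith
    clear_value s t
    rcases le_or_gt t 2 with h | h
    · nlinarith
    · nlinarith [sq_nonneg (t - 4), sq_nonneg (s - t + 1)]
  calc Real.exp (-‖x - w‖ ^ 2) * (‖w - x‖ ^ (j + k) * ‖f w‖)
      ≤ (Real.exp 3 * Real.exp (-(3/4 : ℝ) * ‖w - z₀‖ ^ 2)) *
        (((1 + ‖z₀‖) * (1 + ‖w‖)) ^ p * ‖f w‖) := by
        apply mul_le_mul h3 (mul_le_mul h2 le_rfl (norm_nonneg _) (by positivity))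
          (by positivity) (by positivity)
    _ = (Real.exp 3 * (1 + ‖z₀‖) ^ p) *
        ((1 + ‖w‖) ^ p * (Real.exp (-(3/4 : ℝ) * ‖w - z₀‖ ^ 2) * ‖f w‖)) := by
        rw [mul_pow]; ring

lemma kint {f : ℂ → ℂ} (hm : AEStronglyMeasurable f volume)
    (hint : Integrable (fun w => ‖f w‖ ^ 2 * Real.exp (-‖w‖ ^ 2)) volume) (j k : ℕ) (z : ℂ) : Integrable (fun w => ker f j k z w) volume := by
  refine (((gint f hm hint (j + k) z).const_mul
    (Real.exp 3 * (1 + ‖z‖) ^ (j + k))).mono' (aesm_ker hm j k z) ?_)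
  filter_upwards with w
  exact ker_bound f j k z (Metric.mem_ball_self one_pos) (j + k) le_rfl w

lemma norm_cjR_le : ‖cjR‖ ≤ 1 := by
  refine ContinuousLinearMap.opNorm_le_bound _ zero_le_one fun x => ?_
  rw [one_mul, cjR_apply]
  exact le_of_eq (RCLike.norm_conj _)

lemma kerD_bound (f : ℂ → ℂ) (j k : ℕ) (z₀ : ℂ) {x : ℂ} (hx : x ∈ Metric.ball z₀ 1) (w : ℂ) :
    ‖kerD f j k x w‖ ≤ ((j : ℝ) + k + 2) * ((Real.exp 3 * (1 + ‖z₀‖) ^ (j + k + 1)) *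
      ((1 + ‖w‖) ^ (j + k + 1) * (Real.exp (-(3/4 : ℝ) * ‖w - z₀‖ ^ 2) * ‖f w‖))) := by
  set M : ℝ := (Real.exp 3 * (1 + ‖z₀‖) ^ (j + k + 1)) *
      ((1 + ‖w‖) ^ (j + k + 1) * (Real.exp (-(3/4 : ℝ) * ‖w - z₀‖ ^ 2) * ‖f w‖)) with hM
  have hMn : 0 ≤ M := by positivity
  have hb1 : ‖ker f j (k + 1) x w‖ ≤ M := ker_bound f j (k + 1) z₀ hx _ (by omega) w
  have hb2 : ‖ker f (j - 1) k x w‖ ≤ M := ker_bound f (j - 1) k z₀ hx _ (by omega) w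
  have hb3 : ‖ker f (j + 1) k x w‖ ≤ M := ker_bound f (j + 1) k z₀ hx _ (by omega) w
  have hb4 : ‖ker f j (k - 1) x w‖ ≤ M := ker_bound f j (k - 1) z₀ hx _ (by omega) w
  have hc1 : ‖ker f j (k + 1) x w - (j : ℂ) * ker f (j - 1) k x w‖ ≤ M + (j : ℝ) * M := by
    calc ‖ker f j (k + 1) x w - (j : ℂ) * ker f (j - 1) k x w‖
        ≤ ‖ker f j (k + 1) x w‖ + ‖(j : ℂ) * ker f (j - 1) k x w‖ := norm_sub_le _ _
      _ ≤ M + (j : ℝ) * M := by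
          rw [norm_mul, Complex.norm_natCast]
          exact add_le_add hb1 (by
            exact mul_le_mul_of_nonneg_left hb2 (Nat.cast_nonneg j))
  have hc2 : ‖ker f (j + 1) k x w - (k : ℂ) * ker f j (k - 1) x w‖ ≤ M + (k : ℝ) * M := by
    calc ‖ker f (j + 1) k x w - (k : ℂ) * ker f j (k - 1) x w‖
        ≤ ‖ker f (j + 1) k x w‖ + ‖(k : ℂ) * ker f j (k - 1) x w‖ := norm_sub_le _ _
      _ ≤ M + (k : ℝ) * M := by
          rw [norm_mul, Complex.norm_natCast]
          exact add_le_add hb3 (mul_le_mul_of_nonneg_left hb4 (Nat.cast_nonneg k))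
  calc ‖kerD f j k x w‖
      ≤ ‖(ker f j (k + 1) x w - (j : ℂ) * ker f (j - 1) k x w) • idR‖
        + ‖(ker f (j + 1) k x w - (k : ℂ) * ker f j (k - 1) x w) • cjR‖ := norm_add_le _ _
    _ ≤ (M + (j : ℝ) * M) * 1 + (M + (k : ℝ) * M) * 1 := by
        refine add_le_add ((ContinuousLinearMap.opNorm_smul_le _ _).trans ?_) ((ContinuousLinearMap.opNorm_smul_le _ _).trans ?_)
        · exact mul_le_mul hc1 ContinuousLinearMap.norm_id_le (norm_nonneg _) (by positivity)
        · exact mul_le_mul hc2 norm_cjR_le (norm_nonneg _) (by positivity)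
    _ ≤ ((j : ℝ) + k + 2) * M := by nlinarith
    _ = _ := by rw [hM]

lemma hasFDerivAt_L {f : ℂ → ℂ} (hm : AEStronglyMeasurable f volume)
    (hint : Integrable (fun w => ‖f w‖ ^ 2 * Real.exp (-‖w‖ ^ 2)) volume) (j k : ℕ) (z₀ : ℂ) :
    HasFDerivAt (L f j k)
      ((L f j (k + 1) z₀ - (j : ℂ) * L f (j - 1) k z₀) • idR
        + (L f (j + 1) k z₀ - (k : ℂ) * L f j (k - 1) z₀) • cjR) z₀ := by
  have haesD : AEStronglyMeasurable (fun w => kerD f j k z₀ w) volume := by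
    have hc1 : AEStronglyMeasurable
        (fun w => ker f j (k + 1) z₀ w - (j : ℂ) * ker f (j - 1) k z₀ w) volume :=
      (aesm_ker hm j (k + 1) z₀).sub ((aesm_ker hm (j - 1) k z₀).const_mul _)
    have hc2 : AEStronglyMeasurable
        (fun w => ker f (j + 1) k z₀ w - (k : ℂ) * ker f j (k - 1) z₀ w) volume :=
      (aesm_ker hm (j + 1) k z₀).sub ((aesm_ker hm j (k - 1) z₀).const_mul _)
    exact ((by fun_prop : Continuous fun c : ℂ =>
        c • idR).comp_aestronglyMeasurable hc1).add
      ((by fun_prop : Continuous fun c : ℂ => c • cjR).comp_aestronglyMeasurable hc2)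
  have key := hasFDerivAt_integral_of_dominated_of_fderiv_le (𝕜 := ℝ) (μ := volume)
    (F := fun x w => ker f j k x w) (F' := fun x w => kerD f j k x w) (x₀ := z₀)
    (bound := fun w => ((j : ℝ) + k + 2) * ((Real.exp 3 * (1 + ‖z₀‖) ^ (j + k + 1)) *
      ((1 + ‖w‖) ^ (j + k + 1) * (Real.exp (-(3/4 : ℝ) * ‖w - z₀‖ ^ 2) * ‖f w‖))))
    (Metric.ball_mem_nhds z₀ one_pos)
    (Filter.Eventually.of_forall fun x => aesm_ker hm j k x)
    (kint hm hint j k z₀)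
    haesD
    (Filter.Eventually.of_forall fun w x hx => kerD_bound f j k z₀ hx w)
    (((gint f hm hint (j + k + 1) z₀).const_mul
      (Real.exp 3 * (1 + ‖z₀‖) ^ (j + k + 1))).const_mul ((j : ℝ) + k + 2))
    (Filter.Eventually.of_forall fun w x _ => hasFDerivAt_ker f j k w x)
  have h1 : Integrable (fun w => ker f j (k + 1) z₀ w - (j : ℂ) * ker f (j - 1) k z₀ w)
      volume := (kint hm hint j (k + 1) z₀).sub ((kint hm hint (j - 1) k z₀).const_mul _)
  have h2 : Integrable (fun w => ker f (j + 1) k z₀ w - (k : ℂ) * ker f j (k - 1) z₀ w)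
      volume := (kint hm hint (j + 1) k z₀).sub ((kint hm hint j (k - 1) z₀).const_mul _)
  have hI : (∫ w, kerD f j k z₀ w)
      = (L f j (k + 1) z₀ - (j : ℂ) * L f (j - 1) k z₀) • idR
        + (L f (j + 1) k z₀ - (k : ℂ) * L f j (k - 1) z₀) • cjR := by
    calc (∫ w, kerD f j k z₀ w)
        = (∫ w, (ker f j (k + 1) z₀ w - (j : ℂ) * ker f (j - 1) k z₀ w) • idR)
          + ∫ w, (ker f (j + 1) k z₀ w - (k : ℂ) * ker f j (k - 1) z₀ w) • cjR := by
            rw [← integral_add (h1.smul_const idR) (h2.smul_const cjR)]; rfl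
      _ = (∫ w, (ker f j (k + 1) z₀ w - (j : ℂ) * ker f (j - 1) k z₀ w)) • idR
          + (∫ w, (ker f (j + 1) k z₀ w - (k : ℂ) * ker f j (k - 1) z₀ w)) • cjR := by
            rw [integral_smul_const, integral_smul_const]
      _ = _ := by
            rw [integral_sub (kint hm hint j (k + 1) z₀) ((kint hm hint (j - 1) k z₀).const_mul _),
              integral_sub (kint hm hint (j + 1) k z₀) ((kint hm hint j (k - 1) z₀).const_mul _),
              integral_const_mul, integral_const_mul]
            rfl
  rw [← hI]
  exact key

end Main

lemma wirt_L {f : ℂ → ℂ} (hm : AEStronglyMeasurable f volume)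
    (hint : Integrable (fun w => ‖f w‖ ^ 2 * Real.exp (-‖w‖ ^ 2)) volume) (j k : ℕ) (z : ℂ) :
    wirtingerDerivOp (L f j k) z = L f j (k + 1) z - (j : ℂ) * L f (j - 1) k z := by
  simp only [wirtingerDerivOp]
  rw [(hasFDerivAt_L hm hint j k z).fderiv]
  simp only [ContinuousLinearMap.add_apply, ContinuousLinearMap.smul_apply, idR_apply,
    cjR_apply, smul_eq_mul, map_one, Complex.conj_I, mul_one]
  set c1 : ℂ := L f j (k + 1) z - (j : ℂ) * L f (j - 1) k z
  set c2 : ℂ := L f (j + 1) k z - (k : ℂ) * L f j (k - 1) z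
  linear_combination ((c2 - c1) / 2) * Complex.I_sq

lemma wirt_const_mul (a : ℂ) {g : ℂ → ℂ} {z : ℂ} (hg : DifferentiableAt ℝ g z) :
    wirtingerDerivOp (fun x => a * g x) z = a * wirtingerDerivOp g z := by
  simp only [wirtingerDerivOp]
  rw [fderiv_const_mul hg a]
  simp only [ContinuousLinearMap.coe_smul', Pi.smul_apply, smul_eq_mul]
  ring

lemma contDiff_L {f : ℂ → ℂ} (hm : AEStronglyMeasurable f volume)
    (hint : Integrable (fun w => ‖f w‖ ^ 2 * Real.exp (-‖w‖ ^ 2)) volume) :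
    ∀ (m : ℕ) (j k : ℕ), ContDiff ℝ m (L f j k) := by
  intro m
  induction m with
  | zero =>
    intro j k
    rw [show ((0 : ℕ) : WithTop ℕ∞) = 0 from rfl, contDiff_zero]
    exact continuous_iff_continuousAt.2 fun z =>
      (hasFDerivAt_L hm hint j k z).differentiableAt.continuousAt
  | succ m ih =>
    intro j k
    have hcast : ((m + 1 : ℕ) : WithTop ℕ∞) = (m : WithTop ℕ∞) + 1 := by push_cast; rfl
    rw [hcast, contDiff_succ_iff_fderiv]
    refine ⟨fun z => (hasFDerivAt_L hm hint j k z).differentiableAt, ?_, ?_⟩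
    · intro h; simp at h
    · have hfd : fderiv ℝ (L f j k) = fun z =>
          (L f j (k + 1) z - (j : ℂ) * L f (j - 1) k z) • idR
            + (L f (j + 1) k z - (k : ℂ) * L f j (k - 1) z) • cjR :=
        funext fun z => (hasFDerivAt_L hm hint j k z).fderiv
      rw [hfd]
      have hsm : ContDiff ℝ (m : WithTop ℕ∞) (fun p : ℂ × (ℂ →L[ℝ] ℂ) => p.1 • p.2) :=
        isBoundedBilinearMap_smul.contDiff
      exact (hsm.comp (((ih j (k + 1)).sub (contDiff_const.mul (ih (j - 1) k))).prodMk
          contDiff_const)).add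
        (hsm.comp (((ih (j + 1) k).sub (contDiff_const.mul (ih j (k - 1)))).prodMk contDiff_const))

lemma kint2 {f : ℂ → ℂ} (hm : AEStronglyMeasurable f volume)
    (hint : Integrable (fun w => ‖f w‖ ^ 2 * Real.exp (-‖w‖ ^ 2)) volume) (m : ℕ) (z : ℂ) :
    Integrable (fun w => Complex.exp (-((‖z - w‖ : ℂ) ^ 2)) * (conj w ^ m * f w)) volume := by
  refine (gint f hm hint m z).mono' ?_ ?_
  · exact ((by fun_prop : Continuous fun w : ℂ =>
      Complex.exp (-((‖z - w‖ : ℂ) ^ 2))).aestronglyMeasurable).mul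
      ((((continuous_conj).pow m).aestronglyMeasurable).mul hm)
  · filter_upwards with w
    have h1 : ‖Complex.exp (-((‖z - w‖ : ℂ) ^ 2))‖ = Real.exp (-‖z - w‖ ^ 2) := by
      rw [Complex.norm_exp]
      congr 1
      rw [← Complex.ofReal_pow]
      simp [← Complex.ofReal_pow]
    rw [norm_mul, norm_mul, norm_pow, h1, RCLike.norm_conj]
    have h2 : Real.exp (-‖z - w‖ ^ 2) ≤ Real.exp (-(3/4 : ℝ) * ‖w - z‖ ^ 2) := by
      apply Real.exp_le_exp.2
      rw [norm_sub_rev w z]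
      nlinarith [sq_nonneg ‖z - w‖]
    have h3 : ‖w‖ ^ m ≤ (1 + ‖w‖) ^ m :=
      pow_le_pow_left₀ (norm_nonneg _) (by linarith [norm_nonneg w]) m
    calc Real.exp (-‖z - w‖ ^ 2) * (‖w‖ ^ m * ‖f w‖)
        ≤ Real.exp (-(3/4 : ℝ) * ‖w - z‖ ^ 2) * ((1 + ‖w‖) ^ m * ‖f w‖) := by
          apply mul_le_mul h2 (mul_le_mul h3 le_rfl (norm_nonneg _) (by positivity))
            (by positivity) (by positivity)
      _ = (1 + ‖w‖) ^ m * (Real.exp (-(3/4 : ℝ) * ‖w - z‖ ^ 2) * ‖f w‖) := by ring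

lemma L_zero_eq {f : ℂ → ℂ} (hm : AEStronglyMeasurable f volume)
    (hint : Integrable (fun w => ‖f w‖ ^ 2 * Real.exp (-‖w‖ ^ 2)) volume) (n : ℕ) (z : ℂ) :
    L f 0 n z = ∑ k ∈ Finset.range (n + 1), (-1 : ℂ) ^ k * (n.choose k : ℂ) * conj z ^ k *
      ∫ w, Complex.exp (-((‖z - w‖ : ℂ) ^ 2)) * (conj w ^ (n - k) * f w) := by
  have hker : (fun w => ker f 0 n z w) = fun w => ∑ k ∈ Finset.range (n + 1),
      (-1 : ℂ) ^ k * (n.choose k : ℂ) * conj z ^ k *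
        (Complex.exp (-((‖z - w‖ : ℂ) ^ 2)) * (conj w ^ (n - k) * f w)) := by
    funext w
    rw [ker, pow_zero, one_mul]
    have hbin : (conj w - conj z) ^ n = ∑ k ∈ Finset.range (n + 1),
        (-conj z) ^ k * conj w ^ (n - k) * (n.choose k : ℂ) := by
      rw [sub_eq_add_neg, add_comm]
      exact add_pow _ _ n
    rw [hbin, Finset.sum_mul, Finset.mul_sum]
    refine Finset.sum_congr rfl fun k hk => ?_
    rw [neg_pow]
    ring
  rw [L, hker, integral_finset_sum _ fun k _ => ((kint2 hm hint (n - k) z).const_mul _)]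
  exact Finset.sum_congr rfl fun k _ => integral_const_mul _ _

lemma berezin_eq_L {f : ℂ → ℂ} : berezin f = fun z => (1 / (Real.pi : ℂ)) * L f 0 0 z := by
  funext z
  rw [berezin]
  congr 1
  refine integral_congr_ae (Filter.Eventually.of_forall fun w => ?_)
  simp [ker]

lemma iter_wirt {f : ℂ → ℂ} (hm : AEStronglyMeasurable f volume)
    (hint : Integrable (fun w => ‖f w‖ ^ 2 * Real.exp (-‖w‖ ^ 2)) volume) (n : ℕ) :
    wirtingerDerivOp^[n] (berezin f) = fun z => (1 / (Real.pi : ℂ)) * L f 0 n z := by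
  induction n with
  | zero => simpa using berezin_eq_L
  | succ n ih =>
    rw [Function.iterate_succ_apply', ih]
    funext z
    rw [wirt_const_mul _ (hasFDerivAt_L hm hint 0 n z).differentiableAt,
      wirt_L hm hint 0 n z]
    simp

/-- If `f : ℂ → ℂ` is square integrable for the Gaussian measure and `n ≥ 0`, then
`B(f)` is smooth and its `n`-th iterated Wirtinger derivative satisfies
`(∂/∂z)^n B(f)(z) = Σ_{k=0}^n (−1)^k·C(n,k)·conj z^k·B(conj w^{n−k}·f)(z)
  = (1/π)∫_ℂ exp(−|z−w|²)·(conj w − conj z)^n·f(w) dA(w)`. -/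
theorem iterated_wirtingerDeriv_berezin (f : ℂ → ℂ)
    (hf : MemLp f 2 gaussianMeasure) (n : ℕ) :
    (∀ m : ℕ, ContDiff ℝ m (berezin f)) ∧
    (∀ z : ℂ,
      (wirtingerDerivOp^[n] (berezin f)) z
        = ∑ k ∈ Finset.range (n + 1),
            (-1 : ℂ) ^ k * (n.choose k : ℂ) * conj z ^ k *
              berezin (fun w => conj w ^ (n - k) * f w) z ∧
      (wirtingerDerivOp^[n] (berezin f)) z
        = (1 / (Real.pi : ℂ)) *
            ∫ w : ℂ,
              Complex.exp (-((‖z - w‖ : ℂ) ^ 2)) * (conj w - conj z) ^ n * f w) := by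
  have hm : AEStronglyMeasurable f volume := by
    refine hf.1.mono_ac (withDensity_absolutelyContinuous' ?_ ?_)
    · fun_prop
    · filter_upwards with w
      simp only [ne_eq, ENNReal.ofReal_eq_zero, not_le]
      positivity
  have hint : Integrable (fun w => ‖f w‖ ^ 2 * Real.exp (-‖w‖ ^ 2)) volume := by
    have h2 := hf.integrable_norm_rpow two_ne_zero ENNReal.ofNat_ne_top
    rw [gaussianMeasure, integrable_withDensity_iff (by fun_prop)
      (Filter.Eventually.of_forall fun w => ENNReal.ofReal_lt_top)] at h2
    have h3 := h2.const_mul Real.pi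
    refine h3.congr ?_
    filter_upwards with w
    rw [ENNReal.toReal_ofReal (by positivity)]
    rw [ENNReal.toReal_ofNat, Real.rpow_two]
    field_simp
  refine ⟨?_, ?_⟩
  · intro m
    rw [berezin_eq_L]
    exact contDiff_const.mul (contDiff_L hm hint m 0 0)
  · intro z
    refine ⟨?_, ?_⟩
    · rw [iter_wirt hm hint n]
      simp only
      rw [L_zero_eq hm hint n z, Finset.mul_sum]
      refine Finset.sum_congr rfl fun k _ => ?_
      rw [berezin]
      ring
    · rw [iter_wirt hm hint n]
      simp only
      congr 1
      rw [L]
      refine integral_congr_ae (Filter.Eventually.of_forall fun w => ?_)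
      rw [ker, pow_zero, one_mul]
      exact (mul_assoc _ _ _).symm
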